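/- arXiv:1202.2049 — 2 statements merged into one kernel-verified Lean document; each statement's English description precedes it below -/
import Mathlib

section
/- The normalized Eisenstein series satisfies the differential equation $q\frac{d}{dq}E_2(q) = \frac{E_2(q)^2 - E_4(q)}{12}$ as an identity of $q$-series. -/
noncomputable section

/-- The normalized Eisenstein series of (even) weight `w` as a formal `q`-series:
`E_w = 1 - (2w/B_w) ∑_{n≥1} σ_{w-1}(n) qⁿ`. -/
def Epser (w : ℕ) : PowerSeries ℚ :=
  PowerSeries.mk fun n =>
    if n = 0 then 1 else -(2 * (w : ℚ) / bernoulli w) * (ArithmeticFunction.sigma (w - 1) n : ℚ)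

/-- The operator `q d/dq` on formal `q`-series. -/
def qD (f : PowerSeries ℚ) : PowerSeries ℚ :=
  PowerSeries.mk fun n => (n : ℚ) * PowerSeries.coeff n f

open Finset ArithmeticFunction
open scoped ArithmeticFunction.sigma

/-- The set of quadruples `(a,b,x,y)` of positive naturals with `a*x + b*y = n`. -/
def Sol (n : ℕ) : Finset (ℕ × ℕ × ℕ × ℕ) :=
  ((range (n+1)) ×ˢ (range (n+1)) ×ˢ (range (n+1)) ×ˢ (range (n+1))).filter
    fun q => 0 < q.1 ∧ 0 < q.2.1 ∧ 0 < q.2.2.1 ∧ 0 < q.2.2.2 ∧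
      q.1 * q.2.2.1 + q.2.1 * q.2.2.2 = n

lemma mem_Sol {n : ℕ} {q : ℕ × ℕ × ℕ × ℕ} :
    q ∈ Sol n ↔ 0 < q.1 ∧ 0 < q.2.1 ∧ 0 < q.2.2.1 ∧ 0 < q.2.2.2 ∧
      q.1 * q.2.2.1 + q.2.1 * q.2.2.2 = n := by
  obtain ⟨a, b, x, y⟩ := q
  simp only [Sol, mem_filter, mem_product, mem_range]
  constructor
  · tauto
  · rintro ⟨ha, hb, hx, hy, h⟩
    have h1 : a ≤ a * x := Nat.le_mul_of_pos_right a hx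
    have h2 : b ≤ b * y := Nat.le_mul_of_pos_right b hy
    have h3 : x ≤ a * x := Nat.le_mul_of_pos_left x ha
    have h4 : y ≤ b * y := Nat.le_mul_of_pos_left y hb
    exact ⟨⟨by omega, by omega, by omega, by omega⟩, ha, hb, hx, hy, h⟩

lemma mem_Sol' {n a b x y : ℕ} :
    (a, b, x, y) ∈ Sol n ↔ 0 < a ∧ 0 < b ∧ 0 < x ∧ 0 < y ∧ a * x + b * y = n := mem_Sol

/-- The swap `(a,b,x,y) ↦ (b,a,y,x)`. -/
def sw (q : ℕ × ℕ × ℕ × ℕ) : ℕ × ℕ × ℕ × ℕ := (q.2.1, q.1, q.2.2.2, q.2.2.1)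

lemma sum_sw (n : ℕ) (P : ℕ × ℕ × ℕ × ℕ → Prop) [DecidablePred P] (g : ℕ × ℕ × ℕ × ℕ → ℚ) :
    ∑ q ∈ (Sol n).filter P, g q = ∑ q ∈ (Sol n).filter (fun q => P (sw q)), g (sw q) := by
  refine Finset.sum_nbij' sw sw ?_ ?_ (fun q _ => rfl) (fun q _ => rfl) (fun q _ => rfl) <;>
  · rintro ⟨a, b, x, y⟩ hq
    obtain ⟨hs, hP⟩ := Finset.mem_filter.mp hq
    obtain ⟨ha, hb, hx, hy, he⟩ := mem_Sol'.mp hs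
    show (b, a, y, x) ∈ _
    exact Finset.mem_filter.mpr ⟨mem_Sol'.mpr ⟨hb, ha, hy, hx, by omega⟩, hP⟩

/-- The bijection between solutions with `y < x` and solutions with `a < b`:
`(a,b,x,y) ↦ (a, a+b, x-y, y)` with inverse `(a,b,x,y) ↦ (a, b-a, x+y, y)`. -/
lemma sum_phi (n : ℕ) (g : ℕ × ℕ × ℕ × ℕ → ℚ) :
    ∑ q ∈ (Sol n).filter (fun q => q.2.2.2 < q.2.2.1), g q
      = ∑ q ∈ (Sol n).filter (fun q => q.1 < q.2.1),
          g (q.1, q.2.1 - q.1, q.2.2.1 + q.2.2.2, q.2.2.2) := by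
  refine Finset.sum_nbij' (fun q => (q.1, q.1 + q.2.1, q.2.2.1 - q.2.2.2, q.2.2.2))
    (fun q => (q.1, q.2.1 - q.1, q.2.2.1 + q.2.2.2, q.2.2.2)) ?_ ?_ ?_ ?_ ?_
  · rintro ⟨a, b, x, y⟩ hq
    obtain ⟨hs, hyx0⟩ := Finset.mem_filter.mp hq
    obtain ⟨ha, hb, hx, hy, he⟩ := mem_Sol'.mp hs
    have hyx : y < x := hyx0
    refine Finset.mem_filter.mpr ⟨mem_Sol'.mpr ⟨ha, ?_, ?_, hy, ?_⟩, ?_⟩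
    · show 0 < a + b; omega
    · show 0 < x - y; omega
    · show a * (x - y) + (a + b) * y = n
      zify [Nat.le_of_lt hyx] at he ⊢
      linear_combination he
    · show a < a + b; omega
  · rintro ⟨a, b, x, y⟩ hq
    obtain ⟨hs, hab0⟩ := Finset.mem_filter.mp hq
    obtain ⟨ha, hb, hx, hy, he⟩ := mem_Sol'.mp hs
    have hab : a < b := hab0
    refine Finset.mem_filter.mpr ⟨mem_Sol'.mpr ⟨ha, ?_, ?_, hy, ?_⟩, ?_⟩
    · show 0 < b - a; omega
    · show 0 < x + y; omega
    · show a * (x + y) + (b - a) * y = n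
      zify [Nat.le_of_lt hab] at he ⊢
      linear_combination he
    · show y < x + y; omega
  · rintro ⟨a, b, x, y⟩ hq
    obtain ⟨hs, hyx0⟩ := Finset.mem_filter.mp hq
    obtain ⟨ha, hb, hx, hy, he⟩ := mem_Sol'.mp hs
    have hyx : y < x := hyx0
    show (a, (a + b) - a, (x - y) + y, y) = (a, b, x, y)
    rw [show (a + b) - a = b by omega, show (x - y) + y = x by omega]
  · rintro ⟨a, b, x, y⟩ hq
    obtain ⟨hs, hab0⟩ := Finset.mem_filter.mp hq
    obtain ⟨ha, hb, hx, hy, he⟩ := mem_Sol'.mp hs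
    have hab : a < b := hab0
    show (a, a + (b - a), (x + y) - y, y) = (a, b, x, y)
    rw [show a + (b - a) = b by omega, show (x + y) - y = x by omega]
  · rintro ⟨a, b, x, y⟩ hq
    obtain ⟨hs, hyx0⟩ := Finset.mem_filter.mp hq
    obtain ⟨ha, hb, hx, hy, he⟩ := mem_Sol'.mp hs
    have hyx : y < x := hyx0
    show g (a, b, x, y) = g (a, (a + b) - a, (x - y) + y, y)
    rw [show (a + b) - a = b by omega, show (x - y) + y = x by omega]

/-- Solutions with `x = y` reindexed by a divisor pair `(a+b)·x = n` and `0 < a < a+b`. -/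
lemma sum_diag_x (n : ℕ) (g : ℕ × ℕ × ℕ × ℕ → ℚ) :
    ∑ q ∈ (Sol n).filter (fun q => q.2.2.2 = q.2.2.1), g q
      = ∑ p ∈ n.divisorsAntidiagonal, ∑ a ∈ Ioo 0 p.1, g (a, p.1 - a, p.2, p.2) := by
  rw [Finset.sum_sigma' n.divisorsAntidiagonal (fun p => Ioo 0 p.1)
    (fun p a => g (a, p.1 - a, p.2, p.2))]
  refine Finset.sum_nbij' (fun q => ⟨(q.1 + q.2.1, q.2.2.1), q.1⟩)
    (fun s => (s.2, s.1.1 - s.2, s.1.2, s.1.2)) ?_ ?_ ?_ ?_ ?_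
  · rintro ⟨a, b, x, y⟩ hq
    obtain ⟨hs, hyx0⟩ := Finset.mem_filter.mp hq
    obtain ⟨ha, hb, hx, hy, he⟩ := mem_Sol'.mp hs
    have hyx : y = x := hyx0
    rw [hyx] at he
    have h1 : 0 < a * x := Nat.mul_pos ha hx
    refine Finset.mem_sigma.mpr ⟨Nat.mem_divisorsAntidiagonal.mpr ⟨?_, ?_⟩, ?_⟩
    · show (a + b) * x = n
      zify at he ⊢
      linear_combination he
    · omega
    · exact Finset.mem_Ioo.mpr ⟨ha, show a < a + b by omega⟩
  · rintro ⟨⟨e, x⟩, a⟩ hs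
    obtain ⟨hp, hIoo⟩ := Finset.mem_sigma.mp hs
    obtain ⟨he0, hn⟩ := Nat.mem_divisorsAntidiagonal.mp hp
    obtain ⟨ha0, hae0⟩ := Finset.mem_Ioo.mp hIoo
    have he : e * x = n := he0
    have ha : 0 < a := ha0
    have hae : a < e := hae0
    have hx : 0 < x := by
      rcases Nat.eq_zero_or_pos x with h | h
      · rw [h, mul_zero] at he; omega
      · exact h
    refine Finset.mem_filter.mpr ⟨mem_Sol'.mpr ⟨ha, ?_, hx, hx, ?_⟩, rfl⟩
    · show 0 < e - a; omega
    · show a * x + (e - a) * x = n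
      zify [Nat.le_of_lt hae] at he ⊢
      linear_combination he
  · rintro ⟨a, b, x, y⟩ hq
    obtain ⟨hs, hyx0⟩ := Finset.mem_filter.mp hq
    have hyx : y = x := hyx0
    show (a, (a + b) - a, x, x) = (a, b, x, y)
    rw [show (a + b) - a = b by omega, hyx]
  · rintro ⟨⟨e, x⟩, a⟩ hs
    obtain ⟨hp, hIoo⟩ := Finset.mem_sigma.mp hs
    obtain ⟨ha0, hae0⟩ := Finset.mem_Ioo.mp hIoo
    have hae : a < e := hae0
    show (⟨(a + (e - a), x), a⟩ : Σ _ : ℕ × ℕ, ℕ) = ⟨(e, x), a⟩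
    rw [show a + (e - a) = e by omega]
  · rintro ⟨a, b, x, y⟩ hq
    obtain ⟨hs, hyx0⟩ := Finset.mem_filter.mp hq
    have hyx : y = x := hyx0
    show g (a, b, x, y) = g (a, (a + b) - a, x, x)
    rw [show (a + b) - a = b by omega, hyx]

/-- Solutions with `a = b` reindexed by a divisor pair `a·(x+y) = n` and `0 < x < x+y`. -/
lemma sum_diag_a (n : ℕ) (g : ℕ × ℕ × ℕ × ℕ → ℚ) :
    ∑ q ∈ (Sol n).filter (fun q => q.1 = q.2.1), g q
      = ∑ p ∈ n.divisorsAntidiagonal, ∑ x ∈ Ioo 0 p.2, g (p.1, p.1, x, p.2 - x) := by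
  rw [Finset.sum_sigma' n.divisorsAntidiagonal (fun p => Ioo 0 p.2)
    (fun p x => g (p.1, p.1, x, p.2 - x))]
  refine Finset.sum_nbij' (fun q => ⟨(q.1, q.2.2.1 + q.2.2.2), q.2.2.1⟩)
    (fun s => (s.1.1, s.1.1, s.2, s.1.2 - s.2)) ?_ ?_ ?_ ?_ ?_
  · rintro ⟨a, b, x, y⟩ hq
    obtain ⟨hs, hab0⟩ := Finset.mem_filter.mp hq
    obtain ⟨ha, hb, hx, hy, he⟩ := mem_Sol'.mp hs
    have hab : a = b := hab0
    rw [← hab] at he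
    have h1 : 0 < a * x := Nat.mul_pos ha hx
    refine Finset.mem_sigma.mpr ⟨Nat.mem_divisorsAntidiagonal.mpr ⟨?_, ?_⟩, ?_⟩
    · show a * (x + y) = n
      zify at he ⊢
      linear_combination he
    · omega
    · exact Finset.mem_Ioo.mpr ⟨hx, show x < x + y by omega⟩
  · rintro ⟨⟨a, s⟩, x⟩ hs
    obtain ⟨hp, hIoo⟩ := Finset.mem_sigma.mp hs
    obtain ⟨he0, hn⟩ := Nat.mem_divisorsAntidiagonal.mp hp
    obtain ⟨hx0, hxs0⟩ := Finset.mem_Ioo.mp hIoo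
    have he : a * s = n := he0
    have hx : 0 < x := hx0
    have hxs : x < s := hxs0
    have ha : 0 < a := by
      rcases Nat.eq_zero_or_pos a with h | h
      · rw [h, zero_mul] at he; omega
      · exact h
    refine Finset.mem_filter.mpr ⟨mem_Sol'.mpr ⟨ha, ha, hx, ?_, ?_⟩, rfl⟩
    · show 0 < s - x; omega
    · show a * x + a * (s - x) = n
      zify [Nat.le_of_lt hxs] at he ⊢
      linear_combination he
  · rintro ⟨a, b, x, y⟩ hq
    obtain ⟨hs, hab0⟩ := Finset.mem_filter.mp hq
    have hab : a = b := hab0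
    show (a, a, x, (x + y) - x) = (a, b, x, y)
    rw [show (x + y) - x = y by omega, hab]
  · rintro ⟨⟨a, s⟩, x⟩ hs
    obtain ⟨hp, hIoo⟩ := Finset.mem_sigma.mp hs
    obtain ⟨hx0, hxs0⟩ := Finset.mem_Ioo.mp hIoo
    have hxs : x < s := hxs0
    show (⟨(a, x + (s - x)), x⟩ : Σ _ : ℕ × ℕ, ℕ) = ⟨(a, s), x⟩
    rw [show x + (s - x) = s by omega]
  · rintro ⟨a, b, x, y⟩ hq
    obtain ⟨hs, hab0⟩ := Finset.mem_filter.mp hq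
    have hab : a = b := hab0
    show g (a, b, x, y) = g (a, a, x, (x + y) - x)
    rw [show (x + y) - x = y by omega, hab]

/-- Splitting a sum into `u < v`, `u = v`, `v < u` parts. -/
lemma sum_trichotomy {α : Type*} [DecidableEq α] (s : Finset α) (f : α → ℚ) (u v : α → ℕ) :
    ∑ q ∈ s, f q = (∑ q ∈ s.filter (fun q => u q < v q), f q)
      + (∑ q ∈ s.filter (fun q => u q = v q), f q)
      + (∑ q ∈ s.filter (fun q => v q < u q), f q) := by
  classical
  rw [← Finset.sum_filter_add_sum_filter_not s (fun q => u q < v q) f]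
  rw [← Finset.sum_filter_add_sum_filter_not (s.filter (fun q => ¬ u q < v q))
    (fun q => u q = v q) f]
  rw [Finset.filter_filter, Finset.filter_filter]
  have e1 : s.filter (fun q => ¬ u q < v q ∧ u q = v q) = s.filter (fun q => u q = v q) := by
    ext q
    simp only [Finset.mem_filter]
    constructor
    · rintro ⟨h1, h2, h3⟩; exact ⟨h1, h3⟩
    · rintro ⟨h1, h2⟩; exact ⟨h1, by omega, h2⟩
  have e2 : s.filter (fun q => ¬ u q < v q ∧ ¬ u q = v q) = s.filter (fun q => v q < u q) := by
    ext q
    simp only [Finset.mem_filter]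
    constructor
    · rintro ⟨h1, h2, h3⟩; exact ⟨h1, by omega⟩
    · rintro ⟨h1, h2⟩; exact ⟨h1, by omega, by omega⟩
  rw [e1, e2]
  ring

lemma sum_range_cast (e : ℕ) : ∑ i ∈ range e, (i : ℚ) = ((e : ℚ)^2 - e) / 2 := by
  induction e with
  | zero => simp
  | succ e ih => rw [Finset.sum_range_succ, ih]; push_cast; ring

lemma sum_range_sq_cast (e : ℕ) :
    ∑ i ∈ range e, (i : ℚ)^2 = (2*(e:ℚ)^3 - 3*(e:ℚ)^2 + e) / 6 := by
  induction e with
  | zero => simp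
  | succ e ih => rw [Finset.sum_range_succ, ih]; push_cast; ring

lemma sum_Ioo_of_zero (e : ℕ) (f : ℕ → ℚ) (h0 : f 0 = 0) :
    ∑ i ∈ Ioo 0 e, f i = ∑ i ∈ range e, f i := by
  rcases Nat.eq_zero_or_pos e with h | h
  · subst h; simp
  · rw [Finset.range_eq_Ico, ← Finset.Ioo_insert_left h, Finset.sum_insert
      Finset.left_notMem_Ioo, h0, zero_add]

lemma sum_Ioo_cast (e : ℕ) : ∑ i ∈ Ioo 0 e, (i : ℚ) = ((e : ℚ)^2 - e) / 2 := by
  rw [sum_Ioo_of_zero _ _ (by norm_num), sum_range_cast]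

lemma sum_Ioo_sq_cast (e : ℕ) :
    ∑ i ∈ Ioo 0 e, (i : ℚ)^2 = (2*(e:ℚ)^3 - 3*(e:ℚ)^2 + e) / 6 := by
  rw [sum_Ioo_of_zero _ _ (by norm_num), sum_range_sq_cast]

lemma sum_Ioo_mul_cast (e : ℕ) :
    ∑ a ∈ Ioo 0 e, ((a : ℚ) * ((e : ℚ) - a)) = ((e:ℚ)^3 - e) / 6 := by
  have h : ∀ a ∈ Ioo 0 e, (a : ℚ) * ((e : ℚ) - a) = (e:ℚ) * a - (a:ℚ)^2 :=
    fun a _ => by ring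
  rw [Finset.sum_congr rfl h, Finset.sum_sub_distrib, ← Finset.mul_sum,
    sum_Ioo_cast, sum_Ioo_sq_cast]
  ring

lemma sigma_cast (k n : ℕ) :
    ((σ k n : ℕ) : ℚ) = ∑ d ∈ n.divisors, (d : ℚ)^k := by
  rw [ArithmeticFunction.sigma_apply]
  push_cast
  rfl

lemma Xval (n : ℕ) : ∑ q ∈ (Sol n).filter (fun q => q.2.2.2 = q.2.2.1), ((q.1 : ℚ) * q.2.1)
    = (((σ 3 n : ℕ) : ℚ) - ((σ 1 n : ℕ) : ℚ)) / 6 := by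
  rw [sum_diag_x n (fun q => (q.1 : ℚ) * q.2.1)]
  have step : ∀ p ∈ n.divisorsAntidiagonal,
      (∑ a ∈ Ioo 0 p.1, ((a : ℚ) * ((p.1 - a : ℕ) : ℚ))) = ((p.1:ℚ)^3 - p.1) / 6 := by
    intro p _
    rw [← sum_Ioo_mul_cast p.1]
    exact Finset.sum_congr rfl fun a ha => by
      rw [Nat.cast_sub (Nat.le_of_lt (Finset.mem_Ioo.mp ha).2)]
  have t1 : ∑ p ∈ n.divisorsAntidiagonal, ∑ a ∈ Ioo 0 p.1,
      ((a : ℚ) * ((p.1 - a : ℕ) : ℚ)) = ∑ p ∈ n.divisorsAntidiagonal, ((p.1:ℚ)^3 - p.1) / 6 :=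
    Finset.sum_congr rfl step
  have t2 : ∑ p ∈ n.divisorsAntidiagonal, ((p.1:ℚ)^3 - p.1) / 6
      = ∑ d ∈ n.divisors, ((d:ℚ)^3 - d) / 6 :=
    Nat.sum_divisorsAntidiagonal (fun d e => ((d:ℚ)^3 - d) / 6)
  have t3 : ∑ d ∈ n.divisors, ((d:ℚ)^3 - d) / 6
      = (((σ 3 n : ℕ) : ℚ) - ((σ 1 n : ℕ) : ℚ)) / 6 := by
    rw [sigma_cast, sigma_cast, ← Finset.sum_sub_distrib, ← Finset.sum_div]
    exact congrArg (· / 6) (Finset.sum_congr rfl fun d _ => by rw [pow_one])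
  exact t1.trans (t2.trans t3)

lemma Yval (n : ℕ) : ∑ q ∈ (Sol n).filter (fun q => q.2.2.2 = q.2.2.1), ((q.1 : ℚ))^2
    = (2*((σ 3 n : ℕ) : ℚ) - 3*((σ 2 n : ℕ) : ℚ) + ((σ 1 n : ℕ) : ℚ)) / 6 := by
  rw [sum_diag_x n (fun q => ((q.1 : ℚ))^2)]
  have t1 : ∑ p ∈ n.divisorsAntidiagonal, ∑ a ∈ Ioo 0 p.1, ((a : ℚ))^2
      = ∑ p ∈ n.divisorsAntidiagonal, (2*(p.1:ℚ)^3 - 3*(p.1:ℚ)^2 + p.1) / 6 :=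
    Finset.sum_congr rfl fun p _ => sum_Ioo_sq_cast p.1
  have t2 : ∑ p ∈ n.divisorsAntidiagonal, (2*(p.1:ℚ)^3 - 3*(p.1:ℚ)^2 + p.1) / 6
      = ∑ d ∈ n.divisors, (2*(d:ℚ)^3 - 3*(d:ℚ)^2 + d) / 6 :=
    Nat.sum_divisorsAntidiagonal (fun d e => (2*(d:ℚ)^3 - 3*(d:ℚ)^2 + d) / 6)
  have t3 : ∑ d ∈ n.divisors, (2*(d:ℚ)^3 - 3*(d:ℚ)^2 + d) / 6
      = (2*((σ 3 n : ℕ) : ℚ) - 3*((σ 2 n : ℕ) : ℚ) + ((σ 1 n : ℕ) : ℚ)) / 6 := by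
    rw [sigma_cast, sigma_cast, sigma_cast, Finset.mul_sum, Finset.mul_sum,
      ← Finset.sum_sub_distrib, ← Finset.sum_add_distrib, ← Finset.sum_div]
    exact congrArg (· / 6) (Finset.sum_congr rfl fun d _ => by rw [pow_one])
  exact t1.trans (t2.trans t3)

lemma Dval (n : ℕ) : ∑ q ∈ (Sol n).filter (fun q => q.1 = q.2.1), ((q.1 : ℚ))^2
    = (n : ℚ) * ((σ 1 n : ℕ) : ℚ) - ((σ 2 n : ℕ) : ℚ) := by
  rw [sum_diag_a n (fun q => ((q.1 : ℚ))^2)]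
  have step : ∀ p ∈ n.divisorsAntidiagonal,
      (∑ _x ∈ Ioo 0 p.2, ((p.1 : ℚ))^2) = (p.1 : ℚ) * n - (p.1 : ℚ)^2 := by
    intro p hp
    obtain ⟨hpe, hn0⟩ := Nat.mem_divisorsAntidiagonal.mp hp
    have hp2 : 0 < p.2 := by
      rcases Nat.eq_zero_or_pos p.2 with h | h
      · rw [h, mul_zero] at hpe; omega
      · exact h
    have he : (p.1 : ℚ) * p.2 = n := by exact_mod_cast congrArg (Nat.cast (R := ℚ)) hpe
    rw [Finset.sum_const, Nat.card_Ioo, nsmul_eq_mul, Nat.sub_zero,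
      Nat.cast_sub hp2, Nat.cast_one]
    linear_combination (p.1 : ℚ) * he
  have t1 : ∑ p ∈ n.divisorsAntidiagonal, ∑ _x ∈ Ioo 0 p.2, ((p.1 : ℚ))^2
      = ∑ p ∈ n.divisorsAntidiagonal, ((p.1 : ℚ) * n - (p.1 : ℚ)^2) :=
    Finset.sum_congr rfl step
  have t2 : ∑ p ∈ n.divisorsAntidiagonal, ((p.1 : ℚ) * n - (p.1 : ℚ)^2)
      = ∑ d ∈ n.divisors, ((d : ℚ) * n - (d : ℚ)^2) :=
    Nat.sum_divisorsAntidiagonal (fun d e => (d : ℚ) * n - (d : ℚ)^2)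
  have t3 : ∑ d ∈ n.divisors, ((d : ℚ) * n - (d : ℚ)^2)
      = (n : ℚ) * ((σ 1 n : ℕ) : ℚ) - ((σ 2 n : ℕ) : ℚ) := by
    rw [sigma_cast, sigma_cast, Finset.mul_sum, ← Finset.sum_sub_distrib]
    exact Finset.sum_congr rfl fun d _ => by rw [pow_one]; ring
  exact t1.trans (t2.trans t3)

/-- The key arithmetic identity `12·∑_{ax+by=n} ab = 5σ₃(n) + σ₁(n) − 6n·σ₁(n)`. -/
lemma key (n : ℕ) : 12 * ∑ q ∈ Sol n, ((q.1 : ℚ) * q.2.1)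
    = 5 * ((σ 3 n : ℕ) : ℚ) + ((σ 1 n : ℕ) : ℚ) - 6 * n * ((σ 1 n : ℕ) : ℚ) := by
  have hXv := Xval n
  have hYv := Yval n
  have hDv := Dval n
  set T := ∑ q ∈ Sol n, ((q.1 : ℚ) * q.2.1) with hT
  set U := ∑ q ∈ (Sol n).filter (fun q => q.1 < q.2.1), ((q.1 : ℚ) * q.2.1) with hU
  set V := ∑ q ∈ (Sol n).filter (fun q => q.1 < q.2.1), ((q.1 : ℚ))^2 with hV
  set W := ∑ q ∈ (Sol n).filter (fun q => q.1 < q.2.1), ((q.2.1 : ℚ))^2 with hW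
  set D := ∑ q ∈ (Sol n).filter (fun q => q.1 = q.2.1), ((q.1 : ℚ))^2 with hD
  set X := ∑ q ∈ (Sol n).filter (fun q => q.2.2.2 = q.2.2.1), ((q.1 : ℚ) * q.2.1) with hX
  set Y := ∑ q ∈ (Sol n).filter (fun q => q.2.2.2 = q.2.2.1), ((q.1 : ℚ))^2 with hY
  -- the swap of the `b < a` part of the weight `a*b`
  have hgtU : ∑ q ∈ (Sol n).filter (fun q => q.2.1 < q.1), ((q.1 : ℚ) * q.2.1) = U := by
    rw [sum_sw n (fun q => q.2.1 < q.1) (fun q => (q.1 : ℚ) * q.2.1)]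
    simp only [sw]
    exact (Finset.sum_congr rfl fun q _ => mul_comm _ _).trans hU.symm
  -- the diagonal `a = b` of the weight `a*b`
  have hdiagD : ∑ q ∈ (Sol n).filter (fun q => q.1 = q.2.1), ((q.1 : ℚ) * q.2.1) = D := by
    refine (Finset.sum_congr rfl fun q hq => ?_).trans hD.symm
    obtain ⟨-, h⟩ := Finset.mem_filter.mp hq
    rw [← h]; ring
  have R1 : T = U + D + U := by
    rw [hT, sum_trichotomy (Sol n) _ (fun q => q.1) (fun q => q.2.1), hgtU, hdiagD, ← hU]
  -- phi applied to the weight `a*b`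
  have hphi_ab : ∑ q ∈ (Sol n).filter (fun q => q.2.2.2 < q.2.2.1), ((q.1 : ℚ) * q.2.1)
      = U - V := by
    rw [sum_phi n (fun q => (q.1 : ℚ) * q.2.1), hU, hV, ← Finset.sum_sub_distrib]
    refine Finset.sum_congr rfl fun q hq => ?_
    obtain ⟨-, h⟩ := Finset.mem_filter.mp hq
    show ((q.1 : ℚ)) * ((q.2.1 - q.1 : ℕ) : ℚ) = (q.1 : ℚ) * q.2.1 - ((q.1 : ℚ))^2
    rw [Nat.cast_sub (Nat.le_of_lt h)]
    ring
  -- phi applied to the weight `a^2`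
  have hphi_a2 : ∑ q ∈ (Sol n).filter (fun q => q.2.2.2 < q.2.2.1), ((q.1 : ℚ))^2 = V := by
    rw [sum_phi n (fun q => ((q.1 : ℚ))^2), ← hV]
  -- phi applied to the weight `b^2`
  have hphi_b2 : ∑ q ∈ (Sol n).filter (fun q => q.2.2.2 < q.2.2.1), ((q.2.1 : ℚ))^2
      = W + V - 2 * U := by
    rw [sum_phi n (fun q => ((q.2.1 : ℚ))^2)]
    have step : ∀ q ∈ (Sol n).filter (fun q => q.1 < q.2.1),
        (((q.2.1 - q.1 : ℕ) : ℚ))^2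
          = ((q.2.1:ℚ))^2 + ((q.1:ℚ))^2 - 2 * ((q.1:ℚ) * q.2.1) := by
      intro q hq
      obtain ⟨-, h⟩ := Finset.mem_filter.mp hq
      rw [Nat.cast_sub (Nat.le_of_lt h)]
      ring
    rw [Finset.sum_congr rfl step, hW, hV, hU, Finset.sum_sub_distrib,
      Finset.sum_add_distrib, ← Finset.mul_sum]
  -- the swap of the `x < y` part of the weight `a*b`
  have hltT : ∑ q ∈ (Sol n).filter (fun q => q.2.2.1 < q.2.2.2), ((q.1 : ℚ) * q.2.1)
      = U - V := by
    rw [sum_sw n (fun q => q.2.2.1 < q.2.2.2) (fun q => (q.1 : ℚ) * q.2.1)]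
    simp only [sw]
    exact (Finset.sum_congr rfl fun q _ => mul_comm _ _).trans hphi_ab
  -- the diagonal `y = x` of the weight `a*b` is `X` by definition
  have R2 : T = (U - V) + X + (U - V) := by
    rw [hT, sum_trichotomy (Sol n) _ (fun q => q.2.2.2) (fun q => q.2.2.1), hphi_ab, hltT, ← hX]
  -- the swap of the `b < a` part of the weight `a^2`
  have hgt_a2 : ∑ q ∈ (Sol n).filter (fun q => q.2.1 < q.1), ((q.1 : ℚ))^2 = W := by
    rw [sum_sw n (fun q => q.2.1 < q.1) (fun q => ((q.1 : ℚ))^2)]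
    simp only [sw]
    exact hW.symm
  -- the swap of the `x < y` part of the weight `a^2`
  have hlt_a2 : ∑ q ∈ (Sol n).filter (fun q => q.2.2.1 < q.2.2.2), ((q.1 : ℚ))^2
      = W + V - 2 * U := by
    rw [sum_sw n (fun q => q.2.2.1 < q.2.2.2) (fun q => ((q.1 : ℚ))^2)]
    simp only [sw]
    exact hphi_b2
  have R3a : ∑ q ∈ Sol n, ((q.1 : ℚ))^2 = V + D + W := by
    rw [sum_trichotomy (Sol n) _ (fun q => q.1) (fun q => q.2.1), hgt_a2, ← hV, ← hD]
  have R3b : ∑ q ∈ Sol n, ((q.1 : ℚ))^2 = V + Y + (W + V - 2 * U) := by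
    rw [sum_trichotomy (Sol n) _ (fun q => q.2.2.2) (fun q => q.2.2.1), hphi_a2, hlt_a2, ← hY]
  have R3 : V + D + W = V + Y + (W + V - 2 * U) := R3a.symm.trans R3b
  linarith [R1, R2, R3, hXv, hYv, hDv]

/-- The convolution sum written as a sum over `Sol n`. -/
lemma conv_eq_T (n : ℕ) :
    ∑ m ∈ Ioo 0 n, (((σ 1 m : ℕ) : ℚ) * ((σ 1 (n - m) : ℕ) : ℚ))
      = ∑ q ∈ Sol n, ((q.1 : ℚ) * q.2.1) := by
  have hsig : ∀ m : ℕ, ((σ 1 m : ℕ) : ℚ) = ∑ p ∈ m.divisorsAntidiagonal, (p.1 : ℚ) := by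
    intro m
    rw [sigma_cast,
      show (∑ d ∈ m.divisors, (d:ℚ)^1) = ∑ d ∈ m.divisors, (d:ℚ) from
        Finset.sum_congr rfl fun d _ => by rw [pow_one]]
    exact (Nat.sum_divisorsAntidiagonal (fun d e => (d : ℚ))).symm
  have step1 : ∀ m ∈ Ioo 0 n, ((σ 1 m : ℕ) : ℚ) * ((σ 1 (n - m) : ℕ) : ℚ)
      = ∑ p ∈ m.divisorsAntidiagonal ×ˢ (n - m).divisorsAntidiagonal,
          ((p.1.1 : ℚ) * p.2.1) := by
    intro m _
    rw [hsig m, hsig (n - m), Finset.sum_mul_sum, ← Finset.sum_product']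
  rw [Finset.sum_congr rfl step1,
    Finset.sum_sigma' (Ioo 0 n)
      (fun m => m.divisorsAntidiagonal ×ˢ (n - m).divisorsAntidiagonal)
      (fun m p => ((p.1.1 : ℚ) * p.2.1))]
  refine Finset.sum_nbij' (fun s => (s.2.1.1, s.2.2.1, s.2.1.2, s.2.2.2))
    (fun q => ⟨q.1 * q.2.2.1, ((q.1, q.2.2.1), (q.2.1, q.2.2.2))⟩) ?_ ?_ ?_ ?_ ?_
  · rintro ⟨m, ⟨a, x⟩, ⟨b, y⟩⟩ hs
    obtain ⟨hm, hprod⟩ := Finset.mem_sigma.mp hs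
    obtain ⟨h1, h2⟩ := Finset.mem_product.mp hprod
    obtain ⟨hax0, hm00⟩ := Nat.mem_divisorsAntidiagonal.mp h1
    obtain ⟨hby0, hnm00⟩ := Nat.mem_divisorsAntidiagonal.mp h2
    obtain ⟨hm10, hmn0⟩ := Finset.mem_Ioo.mp hm
    have hax : a * x = m := hax0
    have hby : b * y = n - m := hby0
    have hm0 : m ≠ 0 := hm00
    have hnm0 : n - m ≠ 0 := hnm00
    have hm1 : 0 < m := hm10
    have hmn : m < n := hmn0
    have ha : 0 < a := by
      rcases Nat.eq_zero_or_pos a with h | h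
      · rw [h, zero_mul] at hax; omega
      · exact h
    have hx : 0 < x := by
      rcases Nat.eq_zero_or_pos x with h | h
      · rw [h, mul_zero] at hax; omega
      · exact h
    have hb : 0 < b := by
      rcases Nat.eq_zero_or_pos b with h | h
      · rw [h, zero_mul] at hby; omega
      · exact h
    have hy : 0 < y := by
      rcases Nat.eq_zero_or_pos y with h | h
      · rw [h, mul_zero] at hby; omega
      · exact h
    show (a, b, x, y) ∈ Sol n
    exact mem_Sol'.mpr ⟨ha, hb, hx, hy, by omega⟩
  · rintro ⟨a, b, x, y⟩ hq
    obtain ⟨ha, hb, hx, hy, he⟩ := mem_Sol'.mp hq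
    have h1 : 0 < a * x := Nat.mul_pos ha hx
    have h2 : 0 < b * y := Nat.mul_pos hb hy
    refine Finset.mem_sigma.mpr ⟨Finset.mem_Ioo.mpr
        ⟨show 0 < a * x by omega, show a * x < n by omega⟩,
      Finset.mem_product.mpr
        ⟨Nat.mem_divisorsAntidiagonal.mpr ⟨rfl, show a * x ≠ 0 by omega⟩,
         Nat.mem_divisorsAntidiagonal.mpr
           ⟨show b * y = n - a * x by omega, show n - a * x ≠ 0 by omega⟩⟩⟩
  · rintro ⟨m, ⟨a, x⟩, ⟨b, y⟩⟩ hs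
    obtain ⟨hm, hprod⟩ := Finset.mem_sigma.mp hs
    obtain ⟨h1, h2⟩ := Finset.mem_product.mp hprod
    obtain ⟨hax0, hm0⟩ := Nat.mem_divisorsAntidiagonal.mp h1
    have hax : a * x = m := hax0
    show (⟨a * x, ((a, x), (b, y))⟩ : Σ _ : ℕ, (ℕ × ℕ) × (ℕ × ℕ))
      = ⟨m, ((a, x), (b, y))⟩
    rw [hax]
  · rintro ⟨a, b, x, y⟩ hq
    rfl
  · rintro ⟨m, ⟨a, x⟩, ⟨b, y⟩⟩ hs
    rfl

lemma key_conv (n : ℕ) :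
    12 * ∑ m ∈ Ioo 0 n, (((σ 1 m : ℕ) : ℚ) * ((σ 1 (n - m) : ℕ) : ℚ))
      = 5 * ((σ 3 n : ℕ) : ℚ) + ((σ 1 n : ℕ) : ℚ) - 6 * n * ((σ 1 n : ℕ) : ℚ) := by
  rw [conv_eq_T, key]

lemma range_succ_split {n : ℕ} (hn : 0 < n) (h : ℕ → ℚ) :
    ∑ i ∈ range (n + 1), h i = h 0 + h n + ∑ i ∈ Ioo 0 n, h i := by
  have e1 : range (n + 1) = insert 0 (insert n (Ioo 0 n)) := by
    ext i
    simp only [mem_range, mem_insert, mem_Ioo]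
    omega
  have h1 : (n : ℕ) ∉ Ioo 0 n := by simp only [mem_Ioo]; omega
  have h2 : (0 : ℕ) ∉ insert n (Ioo 0 n) := by simp only [mem_insert, mem_Ioo]; omega
  rw [e1, Finset.sum_insert h2, Finset.sum_insert h1]
  ring

lemma coeff_Epser_two (n : ℕ) (hn : n ≠ 0) :
    PowerSeries.coeff n (Epser 2) = -24 * ((σ 1 n : ℕ) : ℚ) := by
  rw [Epser, PowerSeries.coeff_mk, if_neg hn]
  have hb : (bernoulli 2 : ℚ) = 1 / 6 := by
    rw [bernoulli_eq_bernoulli'_of_ne_one (by norm_num), bernoulli'_two]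
  rw [hb]
  norm_num

lemma coeff_Epser_four (n : ℕ) (hn : n ≠ 0) :
    PowerSeries.coeff n (Epser 4) = 240 * ((σ 3 n : ℕ) : ℚ) := by
  rw [Epser, PowerSeries.coeff_mk, if_neg hn]
  have hb : (bernoulli 4 : ℚ) = -1 / 30 := by
    rw [bernoulli_eq_bernoulli'_of_ne_one (by norm_num), bernoulli'_four]
  rw [hb]
  norm_num

lemma coeff_Epser_zero (w : ℕ) : PowerSeries.coeff 0 (Epser w) = 1 := by
  rw [Epser, PowerSeries.coeff_mk, if_pos rfl]

/-- `q d/dq E₂ = (E₂² - E₄)/12`. -/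
theorem qD_E2 : qD (Epser 2) = (1 / 12 : ℚ) • ((Epser 2) ^ 2 - Epser 4) := by
  ext n
  rw [qD, PowerSeries.coeff_mk, PowerSeries.coeff_smul, smul_eq_mul, map_sub, sq,
    PowerSeries.coeff_mul]
  rcases Nat.eq_zero_or_pos n with hn | hn
  · subst hn
    simp [coeff_Epser_zero]
  · have hne : n ≠ 0 := by omega
    rw [Finset.Nat.sum_antidiagonal_eq_sum_range_succ_mk
      (fun p => PowerSeries.coeff p.1 (Epser 2) * PowerSeries.coeff p.2 (Epser 2)) n]
    rw [range_succ_split hn]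
    have h0 : PowerSeries.coeff 0 (Epser 2) * PowerSeries.coeff (n - 0) (Epser 2)
        = -24 * ((σ 1 n : ℕ) : ℚ) := by
      rw [Nat.sub_zero, coeff_Epser_zero, coeff_Epser_two n hne, one_mul]
    have hn' : PowerSeries.coeff n (Epser 2) * PowerSeries.coeff (n - n) (Epser 2)
        = -24 * ((σ 1 n : ℕ) : ℚ) := by
      rw [Nat.sub_self, coeff_Epser_zero, coeff_Epser_two n hne, mul_one]
    have hmid : ∑ i ∈ Ioo 0 n,
        (PowerSeries.coeff i (Epser 2) * PowerSeries.coeff (n - i) (Epser 2))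
          = 576 * ∑ m ∈ Ioo 0 n, (((σ 1 m : ℕ) : ℚ) * ((σ 1 (n - m) : ℕ) : ℚ)) := by
      rw [Finset.mul_sum]
      refine Finset.sum_congr rfl fun i hi => ?_
      obtain ⟨hi0, hin⟩ := Finset.mem_Ioo.mp hi
      rw [coeff_Epser_two i (by omega), coeff_Epser_two (n - i) (by omega)]
      ring
    rw [h0, hn', hmid, coeff_Epser_two n hne, coeff_Epser_four n hne]
    have hk := key_conv n
    set C := ∑ m ∈ Ioo 0 n, (((σ 1 m : ℕ) : ℚ) * ((σ 1 (n - m) : ℕ) : ℚ)) with hC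
    linarith [hk]
end
end

section
/- The Dedekind eta function satisfies $\eta(\tau)^3 = \theta'(0,\tau)$, where $\theta'$ denotes the derivative of the Jacobi theta function $\theta(z,\tau)$ with respect to $z$. -/
open Complex

noncomputable section

/-- `q = e^{2πiτ}`. -/
def qnome (τ : ℂ) : ℂ := Complex.exp (2 * (Real.pi : ℂ) * I * τ)

/-- The Jacobi theta function
`θ(z,q) = 2 q^{1/8} sinh(z/2) ∏_{n≥1} (1-qⁿeᶻ)(1-qⁿe⁻ᶻ)(1-qⁿ)`. -/
def jacobiTheta1 (z τ : ℂ) : ℂ :=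
  2 * Complex.exp (2 * (Real.pi : ℂ) * I * τ / 8) * Complex.sinh (z / 2) *
    ∏' n : ℕ, ((1 - qnome τ ^ (n + 1) * Complex.exp z) *
      (1 - qnome τ ^ (n + 1) * Complex.exp (-z)) * (1 - qnome τ ^ (n + 1)))

/-- The Dedekind eta function `η(q) = q^{1/24} ∏_{n≥1} (1-qⁿ)`. -/
def dedekindEta (τ : ℂ) : ℂ :=
  Complex.exp (2 * (Real.pi : ℂ) * I * τ / 24) * ∏' n : ℕ, (1 - qnome τ ^ (n + 1))

lemma hasProd_cexp_log {f : ℕ → ℂ} (hne : ∀ n, f n ≠ 0)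
    (hs : Summable fun n => Complex.log (f n)) :
    HasProd f (Complex.exp (∑' n, Complex.log (f n))) := by
  have h := hs.hasSum.cexp
  have h2 : (Complex.exp ∘ fun n => Complex.log (f n)) = f :=
    funext fun n => Complex.exp_log (hne n)
  rwa [h2] at h

/-- `η(τ)³ = θ'(0,τ)`, the derivative of the Jacobi theta function in `z`. -/
theorem eta_cubed_eq_theta_deriv :
    ∀ τ : ℂ, 0 < τ.im → dedekindEta τ ^ 3 = deriv (fun z => jacobiTheta1 z τ) 0 := by
  intro τ hτ
  set q : ℂ := qnome τ with hq
  set a : ℝ := ‖q‖ with haq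
  have ha0 : 0 < a := norm_pos_iff.mpr (Complex.exp_ne_zero _)
  have hre : (2 * (Real.pi : ℂ) * I * τ).re = -(2 * Real.pi * τ.im) := by
    simp [Complex.mul_re, Complex.mul_im]
  have ha1 : a < 1 := by
    rw [haq, hq, qnome, Complex.norm_exp, hre, Real.exp_lt_one_iff]
    nlinarith [Real.pi_pos]
  set b : ℝ := Real.sqrt a with hbdef
  have hb0 : 0 < b := Real.sqrt_pos.mpr ha0
  have hb1 : b < 1 := by
    rw [hbdef, show (1:ℝ) = Real.sqrt 1 by simp]
    exact Real.sqrt_lt_sqrt ha0.le ha1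
  have hab : a = b ^ 2 := (Real.sq_sqrt ha0.le).symm
  set r : ℝ := -Real.log b with hrdef
  have hr0 : 0 < r := neg_pos.mpr (Real.log_neg hb0 hb1)
  -- key bound
  have key : ∀ z : ℂ, ‖z‖ < r → ∀ n : ℕ, ‖q ^ (n + 1) * Complex.exp z‖ ≤ b ^ (n + 1) := by
    intro z hz n
    rw [norm_mul, norm_pow, ← haq, Complex.norm_exp]
    have hzre : z.re ≤ r := le_trans (Complex.re_le_norm z) (le_of_lt hz)
    have hexp : Real.exp z.re ≤ b⁻¹ := by
      calc Real.exp z.re ≤ Real.exp r := Real.exp_le_exp.mpr hzre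
        _ = b⁻¹ := by rw [hrdef, Real.exp_neg, Real.exp_log hb0]
    calc a ^ (n + 1) * Real.exp z.re ≤ a ^ (n + 1) * b⁻¹ := by
          exact mul_le_mul_of_nonneg_left hexp (pow_nonneg ha0.le _)
      _ = b ^ (2 * n + 1) := by
          rw [hab]
          rw [← pow_mul]
          rw [show 2 * (n + 1) = (2 * n + 1) + 1 by ring, pow_succ, mul_assoc,
            mul_inv_cancel₀ hb0.ne', mul_one]
      _ ≤ b ^ (n + 1) := pow_le_pow_of_le_one hb0.le hb1.le (by omega)
  set F : ℂ → ℕ → ℂ := fun w n => 1 - q ^ (n + 1) * Complex.exp w with hF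
  have hFsmall : ∀ w : ℂ, ‖w‖ < r → ∀ n : ℕ, ‖q ^ (n + 1) * Complex.exp w‖ ≤ b := by
    intro w hw n
    exact le_trans (key w hw n) (pow_le_of_le_one hb0.le hb1.le (by omega))
  have hFne : ∀ w : ℂ, ‖w‖ < r → ∀ n : ℕ, F w n ≠ 0 := by
    intro w hw n h0
    have : (1 : ℂ) = q ^ (n + 1) * Complex.exp w := by
      rw [hF] at h0; linear_combination h0
    have := congrArg norm this
    rw [norm_one] at this
    have h2 := hFsmall w hw n
    rw [← this] at h2
    linarith
  have hFslit : ∀ w : ℂ, ‖w‖ < r → ∀ n : ℕ, F w n ∈ Complex.slitPlane := by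
    intro w hw n
    left
    have h2 := hFsmall w hw n
    have h3 : (q ^ (n + 1) * Complex.exp w).re ≤ b := by
      refine le_trans (Complex.re_le_norm _) ?_
      exact h2
    simp only [hF, Complex.sub_re, Complex.one_re]
    linarith
  set C : ℝ := b * (1 - b)⁻¹ / 2 + 1 with hC
  have hlogbound : ∀ w : ℂ, ‖w‖ < r → ∀ n : ℕ,
      ‖Complex.log (F w n)‖ ≤ (C * b) * b ^ n := by
    intro w hw n
    have hub : ‖-(q ^ (n + 1) * Complex.exp w)‖ ≤ b ^ (n + 1) := by
      rw [norm_neg]; exact key w hw n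
    have hub' : ‖-(q ^ (n + 1) * Complex.exp w)‖ ≤ b :=
      le_trans hub (pow_le_of_le_one hb0.le hb1.le (by omega))
    have hlt1 : ‖-(q ^ (n + 1) * Complex.exp w)‖ < 1 := lt_of_le_of_lt hub' hb1
    have hFeq : F w n = 1 + -(q ^ (n + 1) * Complex.exp w) := by rw [hF]; ring
    rw [hFeq]
    refine le_trans (Complex.norm_log_one_add_le hlt1) ?_
    set u := ‖-(q ^ (n + 1) * Complex.exp w)‖ with hu
    have hu0 : 0 ≤ u := norm_nonneg _
    have h1b : (0:ℝ) < 1 - b := by linarith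
    have hinv : (1 - u)⁻¹ ≤ (1 - b)⁻¹ := by
      apply inv_anti₀
      · linarith
      · linarith
    have hsq : u ^ 2 ≤ b ^ (n + 1) * b := by
      calc u ^ 2 = u * u := sq u
        _ ≤ b ^ (n + 1) * b := mul_le_mul hub hub' hu0 (pow_nonneg hb0.le _)
    have hmain : u ^ 2 * (1 - u)⁻¹ ≤ (b ^ (n + 1) * b) * (1 - b)⁻¹ := by
      refine mul_le_mul hsq hinv (inv_nonneg.mpr (by linarith)) (by positivity)
    calc u ^ 2 * (1 - u)⁻¹ / 2 + u
        ≤ (b ^ (n + 1) * b) * (1 - b)⁻¹ / 2 + b ^ (n + 1) := by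
          have := hub; linarith
      _ = (C * b) * b ^ n := by rw [hC]; ring
  have hsummableC : Summable fun n : ℕ => (C * b) * b ^ n :=
    (summable_geometric_of_lt_one hb0.le hb1).mul_left _
  have hsumlog : ∀ w : ℂ, ‖w‖ < r → Summable fun n => Complex.log (F w n) := by
    intro w hw
    exact Summable.of_norm_bounded hsummableC (hlogbound w hw)
  set S : ℂ → ℂ := fun w => ∑' n, Complex.log (F w n) with hS
  have hprod : ∀ w : ℂ, ‖w‖ < r → HasProd (F w) (Complex.exp (S w)) := by
    intro w hw
    exact hasProd_cexp_log (hFne w hw) (hsumlog w hw)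
  have hmult : ∀ w : ℂ, ‖w‖ < r → Multipliable (F w) := fun w hw => ⟨_, hprod w hw⟩
  have htprod : ∀ w : ℂ, ‖w‖ < r → ∏' n, F w n = Complex.exp (S w) := fun w hw =>
    (hprod w hw).tprod_eq
  -- continuity of S on the ball
  have hScont : ContinuousOn S (Metric.ball (0:ℂ) r) := by
    rw [hS]
    apply continuousOn_tsum (u := fun n : ℕ => (C * b) * b ^ n)
    · intro i
      apply ContinuousOn.clog
      · exact (continuous_const.sub (continuous_const.mul Complex.continuous_exp)).continuousOn
      · intro x hx
        rw [Metric.mem_ball, dist_zero_right] at hx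
        exact hFslit x hx i
    · exact hsummableC
    · intro n x hx
      rw [Metric.mem_ball, dist_zero_right] at hx
      exact hlogbound x hx n
  -- the product function
  set P : ℂ → ℂ := fun z => ∏' n : ℕ, ((1 - q ^ (n + 1) * Complex.exp z) *
      (1 - q ^ (n + 1) * Complex.exp (-z)) * (1 - q ^ (n + 1))) with hP
  have hF0 : ∀ n : ℕ, F 0 n = 1 - q ^ (n + 1) := by
    intro n; rw [hF]; simp
  have h0r : ‖(0:ℂ)‖ < r := by simpa using hr0
  have hPsplit : ∀ z : ℂ, ‖z‖ < r →
      P z = (∏' n, F z n) * (∏' n, F (-z) n) * (∏' n, F 0 n) := by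
    intro z hz
    have hnz : ‖(-z)‖ < r := by rwa [norm_neg]
    have h1 : P z = ∏' n : ℕ, (F z n * F (-z) n * F 0 n) := by
      simp only [hP, hF, Complex.exp_zero, mul_one]
    rw [h1, Multipliable.tprod_mul ((hmult z hz).mul (hmult (-z) hnz)) (hmult 0 h0r),
      Multipliable.tprod_mul (hmult z hz) (hmult (-z) hnz)]
  -- continuity of P at 0
  have hSat : ContinuousAt S 0 :=
    hScont.continuousAt (Metric.ball_mem_nhds _ hr0)
  have hGat : ContinuousAt (fun z : ℂ =>
      Complex.exp (S z) * Complex.exp (S (-z)) * (∏' n, F 0 n)) 0 := by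
    apply ContinuousAt.mul _ continuousAt_const
    apply ContinuousAt.mul
    · exact Complex.continuous_exp.continuousAt.comp hSat
    · refine Complex.continuous_exp.continuousAt.comp ?_
      have : ContinuousAt S (-0) := by simpa using hSat
      exact this.comp continuous_neg.continuousAt
  have hPeq : ∀ᶠ z in nhds (0:ℂ), P z =
      Complex.exp (S z) * Complex.exp (S (-z)) * (∏' n, F 0 n) := by
    filter_upwards [Metric.ball_mem_nhds (0:ℂ) hr0] with z hz
    rw [Metric.mem_ball, dist_zero_right] at hz
    have hnz : ‖(-z)‖ < r := by rwa [norm_neg]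
    rw [hPsplit z hz, htprod z hz, htprod (-z) hnz]
  have hPat : ContinuousAt P 0 := hGat.congr (Filter.EventuallyEq.symm hPeq)
  -- value of P at 0
  have hP0 : P 0 = (∏' n : ℕ, (1 - q ^ (n + 1))) ^ 3 := by
    have := hPsplit 0 h0r
    rw [neg_zero] at this
    rw [this]
    have : ∏' n, F 0 n = ∏' n : ℕ, (1 - q ^ (n + 1)) := by
      congr 1; funext n; exact hF0 n
    rw [this]; ring
  -- the theta function as c * sinh(z/2) * P z
  set c : ℂ := 2 * Complex.exp (2 * (Real.pi : ℂ) * I * τ / 8) with hc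
  have hjac : ∀ z : ℂ, jacobiTheta1 z τ = c * Complex.sinh (z / 2) * P z := by
    intro z; rw [jacobiTheta1, hc, hP, hq]
  -- derivative
  have hsinh : Filter.Tendsto (fun z : ℂ => Complex.sinh (z / 2) / z)
      (nhdsWithin 0 {(0:ℂ)}ᶜ) (nhds (1 / 2)) := by
    have hd : HasDerivAt (fun z : ℂ => Complex.sinh (z / 2)) (1 / 2) 0 := by
      have h1 : HasDerivAt (fun z : ℂ => z / 2) (1 / 2) 0 := (hasDerivAt_id (0:ℂ)).div_const 2
      have h2 := (Complex.hasDerivAt_sinh ((0:ℂ) / 2)).comp 0 h1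
      simpa [Function.comp_def] using h2
    have h3 := hasDerivAt_iff_tendsto_slope.mp hd
    refine h3.congr' ?_
    filter_upwards [self_mem_nhdsWithin] with z hz
    have hz0 : z ≠ 0 := hz
    rw [slope_def_field]
    simp [Complex.sinh_zero]
  have hPtend : Filter.Tendsto P (nhdsWithin 0 {(0:ℂ)}ᶜ) (nhds (P 0)) :=
    hPat.tendsto.mono_left nhdsWithin_le_nhds
  have hderiv : HasDerivAt (fun z => jacobiTheta1 z τ) (c * (1 / 2) * P 0) 0 := by
    rw [hasDerivAt_iff_tendsto_slope]
    have hcomb : Filter.Tendsto (fun z : ℂ => c * (Complex.sinh (z / 2) / z) * P z)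
        (nhdsWithin 0 {(0:ℂ)}ᶜ) (nhds (c * (1 / 2) * P 0)) :=
      (Filter.Tendsto.mul (tendsto_const_nhds.mul hsinh) hPtend)
    refine hcomb.congr' ?_
    filter_upwards [self_mem_nhdsWithin] with z hz
    have hz0 : z ≠ 0 := hz
    rw [slope_def_field, hjac z, hjac 0]
    simp only [Complex.sinh_zero, zero_div, mul_zero, zero_mul, sub_zero]
    ring
  rw [hderiv.deriv]
  -- final algebra
  rw [dedekindEta, hP0, hc, ← hq]
  rw [mul_pow, ← Complex.exp_nat_mul]
  have : ((3 : ℕ) : ℂ) * (2 * (Real.pi : ℂ) * I * τ / 24) = 2 * (Real.pi : ℂ) * I * τ / 8 := by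
    push_cast
    ring
  rw [this]
  ring
end
end
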